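/- Let a₄(x,y) = x⁴ + (4ξ − 2)x²y² + y⁴ with ξ = exp(2πi/6), and b₆(x,y) = x⁵y − xy⁵. Then a₄ and b₆ are algebraically independent over ℂ, and up to a nonzero multiplicative constant b₆ equals the Jacobian determinant of the pair (a₄, Hess(a₄)), where Hess(a₄) is the Hessian determinant of a₄. -/

import Mathlib

set_option maxHeartbeats 2000000

open MvPolynomial

/-- `a₄(x,y) = x⁴ + (4ξ − 2)x²y² + y⁴`, where `ξ = exp(2πi/6)`. -/
noncomputable def a4 : MvPolynomial (Fin 2) ℂ :=
  X 0 ^ 4 + C (4 * Complex.exp (2 * Real.pi * Complex.I / 6) - 2) * X 0 ^ 2 * X 1 ^ 2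
    + X 1 ^ 4

/-- `b₆(x,y) = x⁵y − xy⁵`. -/
noncomputable def b6 : MvPolynomial (Fin 2) ℂ := X 0 ^ 5 * X 1 - X 0 * X 1 ^ 5

/-- The Hessian determinant `F_{xx}F_{yy} − F_{xy}²` of a polynomial in two variables. -/
noncomputable def hess (F : MvPolynomial (Fin 2) ℂ) : MvPolynomial (Fin 2) ℂ :=
  pderiv 0 (pderiv 0 F) * pderiv 1 (pderiv 1 F) - (pderiv 0 (pderiv 1 F)) ^ 2

/-- The Jacobian determinant `F_x G_y − F_y G_x` of a pair of polynomials. -/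
noncomputable def jac (F G : MvPolynomial (Fin 2) ℂ) : MvPolynomial (Fin 2) ℂ :=
  pderiv 0 F * pderiv 1 G - pderiv 1 F * pderiv 0 G

local notation "α" => (4 * Complex.exp (2 * Real.pi * Complex.I / 6) - 2 : ℂ)

/-! ### Auxiliary general lemmas -/

lemma aux_coeff_pderiv (i : Fin 2) (P : MvPolynomial (Fin 2) ℂ) (t : Fin 2 →₀ ℕ) :
    coeff t (pderiv i P) = ((t i : ℂ) + 1) * coeff (t + Finsupp.single i 1) P := by
  induction P using MvPolynomial.induction_on' with
  | add p q hp hq => simp [hp, hq]; ring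
  | monomial s a =>
      rw [pderiv_monomial, coeff_monomial, coeff_monomial]
      by_cases h : s = t + Finsupp.single i 1
      · subst h
        have h1 : t + Finsupp.single i 1 - Finsupp.single i 1 = t := by
          ext j; simp [Finsupp.single_apply]
        have h2 : ((t + Finsupp.single i 1 : Fin 2 →₀ ℕ)) i = t i + 1 := by
          rw [Finsupp.add_apply, Finsupp.single_apply, if_pos rfl]
        rw [if_pos h1, if_pos rfl, h2]
        push_cast
        ring
      · rw [if_neg h]
        by_cases h2 : s - Finsupp.single i 1 = t
        · rw [if_pos h2]
          have : s i = 0 := by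
            by_contra hs
            apply h
            ext j
            rw [← h2, Finsupp.add_apply, Finsupp.tsub_apply, Finsupp.single_apply]
            by_cases hj : i = j
            · subst hj; simp; omega
            · simp [hj]
          simp [this]
        · simp [if_neg h2]

lemma aux_support_pderiv_mem {i : Fin 2} {P : MvPolynomial (Fin 2) ℂ} {t : Fin 2 →₀ ℕ}
    (h : t ∈ (pderiv i P).support) : t + Finsupp.single i 1 ∈ P.support := by
  rw [mem_support_iff] at h ⊢
  intro hc
  rw [aux_coeff_pderiv, hc, mul_zero] at h
  exact h rfl

lemma aux_td_pderiv_lt {i : Fin 2} {P : MvPolynomial (Fin 2) ℂ} (h : pderiv i P ≠ 0) :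
    (pderiv i P).totalDegree < P.totalDegree := by
  obtain ⟨t0, ht0⟩ : (pderiv i P).support.Nonempty := MvPolynomial.support_nonempty.mpr h
  have hpos : 0 < P.totalDegree := by
    have := le_totalDegree (aux_support_pderiv_mem ht0)
    have : 1 ≤ (t0 + Finsupp.single i 1).sum fun _ e => e := by
      rw [Finsupp.sum_add_index' (fun _ => rfl) (fun _ _ _ => rfl), Finsupp.sum_single_index rfl]
      omega
    omega
  rw [totalDegree, Finset.sup_lt_iff (by simpa using hpos)]
  intro t ht
  have h1 := le_totalDegree (aux_support_pderiv_mem ht)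
  have h2 : (t + Finsupp.single i 1).sum (fun _ e => e) = (t.sum fun _ e => e) + 1 := by
    rw [Finsupp.sum_add_index' (fun _ => rfl) (fun _ _ _ => rfl), Finsupp.sum_single_index rfl]
  omega

lemma aux_eq_C_of_pderiv_eq_zero {P : MvPolynomial (Fin 2) ℂ}
    (h0 : pderiv 0 P = 0) (h1 : pderiv 1 P = 0) : P = C (coeff 0 P) := by
  have hall : ∀ i, pderiv i P = 0 := by
    intro i; fin_cases i <;> assumption
  ext s
  by_cases hs : s = 0
  · subst hs; simp
  · rw [coeff_C, if_neg (Ne.symm hs)]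
    have : ∃ i, s i ≠ 0 := by
      by_contra hcon
      push_neg at hcon
      exact hs (Finsupp.ext fun j => hcon j)
    obtain ⟨i, hi⟩ := this
    set t : Fin 2 →₀ ℕ := s - Finsupp.single i 1 with htdef
    have key := aux_coeff_pderiv i P t
    rw [hall i] at key
    have hback : t + Finsupp.single i 1 = s := by
      ext j
      rw [htdef, Finsupp.add_apply, Finsupp.tsub_apply, Finsupp.single_apply]
      by_cases hj : i = j
      · subst hj; simp; omega
      · simp [hj]
    rw [hback] at key
    simp only [coeff_zero] at key
    have hne : ((t i : ℂ) + 1) ≠ 0 := by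
      intro hcon
      have : ((t i + 1 : ℕ) : ℂ) = 0 := by push_cast; linear_combination hcon
      exact Nat.succ_ne_zero (t i) (by exact_mod_cast this)
    rcases mul_eq_zero.mp key.symm with h | h
    · exact absurd h hne
    · exact h

lemma aux_chain (f : Fin 2 → MvPolynomial (Fin 2) ℂ) (i : Fin 2) (P : MvPolynomial (Fin 2) ℂ) :
    pderiv i (aeval f P) =
      aeval f (pderiv 0 P) * pderiv i (f 0) + aeval f (pderiv 1 P) * pderiv i (f 1) := by
  induction P using MvPolynomial.induction_on with
  | C a => simp
  | add p q hp hq => simp only [map_add, hp, hq]; ring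
  | mul_X p j hp =>
      fin_cases j <;>
      · simp only [map_mul, aeval_X, pderiv_mul, hp, map_add, pderiv_X]
        simp [Pi.single_apply]
        ring

/-! ### Computations with the specific polynomials -/

lemma aux_h10 : pderiv (1:Fin 2) (X 0 : MvPolynomial (Fin 2) ℂ) = 0 :=
  pderiv_X_of_ne (by decide)
lemma aux_h01 : pderiv (0:Fin 2) (X 1 : MvPolynomial (Fin 2) ℂ) = 0 :=
  pderiv_X_of_ne (by decide)

lemma aux_pd0a4 : pderiv 0 a4 = C 4 * X 0 ^ 3 + C (2*α) * X 0 * X 1 ^ 2 := by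
  rw [a4]
  simp only [map_add, map_sub, map_mul, map_pow, pderiv_mul, pderiv_pow,
    pderiv_C_mul, pderiv_C, pderiv_X_self, aux_h01, aux_h10,
    mul_zero, zero_mul, add_zero, zero_add, sub_zero, zero_sub, mul_one, map_one]
  simp only [map_ofNat]
  push_cast
  ring

lemma aux_pd1a4 : pderiv 1 a4 = C (2*α) * X 0 ^ 2 * X 1 + C 4 * X 1 ^ 3 := by
  rw [a4]
  simp only [map_add, map_sub, map_mul, map_pow, pderiv_mul, pderiv_pow,
    pderiv_C_mul, pderiv_C, pderiv_X_self, aux_h01, aux_h10,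
    mul_zero, zero_mul, add_zero, zero_add, sub_zero, zero_sub, mul_one, map_one]
  simp only [map_ofNat]
  push_cast
  ring

lemma aux_hess_a4 : hess a4 =
    C (24*α) * X 0 ^ 4 + C (144 - 12*α^2) * X 0 ^ 2 * X 1 ^ 2 + C (24*α) * X 1 ^ 4 := by
  rw [hess, aux_pd0a4, aux_pd1a4]
  simp only [map_add, map_sub, map_mul, map_pow, pderiv_mul, pderiv_pow,
    pderiv_C_mul, pderiv_C, pderiv_X_self, aux_h01, aux_h10,
    mul_zero, zero_mul, add_zero, zero_add, sub_zero, zero_sub, mul_one, map_one]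
  simp only [map_ofNat]
  push_cast
  ring

lemma aux_jac_hess : jac a4 (hess a4) = C (1152 - 288 * α ^ 2) * b6 := by
  rw [jac, aux_pd0a4, aux_pd1a4, aux_hess_a4, b6]
  simp only [map_add, map_sub, map_mul, map_pow, pderiv_mul, pderiv_pow,
    pderiv_C_mul, pderiv_C, pderiv_X_self, aux_h01, aux_h10,
    mul_zero, zero_mul, add_zero, zero_add, sub_zero, zero_sub, mul_one, map_one]
  simp only [map_ofNat]
  push_cast
  ring

lemma aux_jac_ne : jac a4 b6 ≠ 0 := by
  intro h
  have := congrArg (eval ![1, 0]) h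
  simp [jac, a4, b6, pderiv_mul, pderiv_pow, Pi.single_apply] at this

lemma aux_c_ne : (1152 - 288 * α ^ 2 : ℂ) ≠ 0 := by
  set ξ := Complex.exp (2 * Real.pi * Complex.I / 6) with hξ
  have hξ0 : ξ ≠ 0 := Complex.exp_ne_zero _
  have hξ1 : ξ ≠ 1 := by
    rw [hξ]
    intro h1
    rw [Complex.exp_eq_one_iff] at h1
    obtain ⟨n, hn⟩ := h1
    have hne : (2 * Real.pi * Complex.I : ℂ) ≠ 0 := by
      simp [Real.pi_ne_zero, Complex.I_ne_zero]
    have h6 : ((6 * n : ℤ) : ℂ) = 1 := by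
      have : (1 - 6 * (n : ℂ)) * (2 * Real.pi * Complex.I) = 0 := by
        linear_combination 6 * hn
      rcases mul_eq_zero.mp this with h | h
      · push_cast; linear_combination -h
      · exact absurd h hne
    have : (6 * n : ℤ) = 1 := by exact_mod_cast h6
    omega
  intro h
  have : ξ * (1 - ξ) = 0 := by linear_combination h / 4608
  rcases mul_eq_zero.mp this with h' | h'
  · exact hξ0 h'
  · exact hξ1 (by linear_combination -h')

/-- `a₄` and `b₆` are algebraically independent over `ℂ`, and up to a nonzero
multiplicative constant `b₆` equals the Jacobian of `(a₄, Hess(a₄))`. -/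
theorem stmt_18 :
    AlgebraicIndependent ℂ ![a4, b6] ∧
      ∃ c : ℂ, c ≠ 0 ∧ jac a4 (hess a4) = C c * b6 := by
  constructor
  · rw [algebraicIndependent_iff]
    suffices h : ∀ n (P : MvPolynomial (Fin 2) ℂ), P.totalDegree ≤ n →
        aeval ![a4, b6] P = 0 → P = 0 by
      intro P hP
      exact h P.totalDegree P le_rfl hP
    intro n
    induction n with
    | zero =>
        intro P hd hev
        have h0 : pderiv 0 P = 0 := by
          by_contra h
          have := aux_td_pderiv_lt h
          omega
        have h1 : pderiv 1 P = 0 := by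
          by_contra h
          have := aux_td_pderiv_lt h
          omega
        have hC := aux_eq_C_of_pderiv_eq_zero h0 h1
        rw [hC] at hev ⊢
        rw [aeval_C] at hev
        have : coeff 0 P = 0 := by
          simpa [Algebra.algebraMap_eq_smul_one] using hev
        rw [this, map_zero]
    | succ n ih =>
        intro P hd hev
        have key : ∀ i : Fin 2, (pderiv i (aeval ![a4, b6] P) : MvPolynomial (Fin 2) ℂ) = 0 := by
          intro i; rw [hev, map_zero]
        have e0 := aux_chain ![a4, b6] 0 P
        have e1 := aux_chain ![a4, b6] 1 P
        rw [key 0] at e0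
        rw [key 1] at e1
        simp only [Matrix.cons_val_zero, Matrix.cons_val_one, Matrix.head_cons] at e0 e1
        set u := aeval ![a4, b6] (pderiv 0 P) with hu
        set v := aeval ![a4, b6] (pderiv 1 P) with hv
        have hu0 : u = 0 := by
          have hmul : u * jac a4 b6 =
              (u * pderiv 0 a4 + v * pderiv 0 b6) * pderiv 1 b6 -
                (u * pderiv 1 a4 + v * pderiv 1 b6) * pderiv 0 b6 := by
            rw [jac]; ring
          rw [← e0, ← e1] at hmul
          simp only [zero_mul, sub_zero, zero_sub, sub_self] at hmul
          rcases mul_eq_zero.mp hmul with h | h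
          · exact h
          · exact absurd h aux_jac_ne
        have hv0 : v = 0 := by
          have hmul : v * jac a4 b6 =
              (u * pderiv 1 a4 + v * pderiv 1 b6) * pderiv 0 a4 -
                (u * pderiv 0 a4 + v * pderiv 0 b6) * pderiv 1 a4 := by
            rw [jac]; ring
          rw [← e0, ← e1] at hmul
          simp only [zero_mul, sub_zero, zero_sub, sub_self] at hmul
          rcases mul_eq_zero.mp hmul with h | h
          · exact h
          · exact absurd h aux_jac_ne
        have hp0 : pderiv 0 P = 0 := by
          by_cases h : pderiv 0 P = 0
          · exact h
          · exact ih (pderiv 0 P) (by have := aux_td_pderiv_lt h; omega) (by rw [← hu]; exact hu0)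
        have hp1 : pderiv 1 P = 0 := by
          by_cases h : pderiv 1 P = 0
          · exact h
          · exact ih (pderiv 1 P) (by have := aux_td_pderiv_lt h; omega) (by rw [← hv]; exact hv0)
        have hC := aux_eq_C_of_pderiv_eq_zero hp0 hp1
        rw [hC] at hev ⊢
        rw [aeval_C] at hev
        have : coeff 0 P = 0 := by
          simpa [Algebra.algebraMap_eq_smul_one] using hev
        rw [this, map_zero]
  · exact ⟨1152 - 288 * α ^ 2, aux_c_ne, aux_jac_hess⟩
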